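/- Coupling monotonicity (claim in the proof of Lemma 3.1): fix d ≥ 1 and p₁ ≤ p₂ in (0,1]. Couple the two-type frog model started from disjoint bounded sets (A,B) with jump probabilities (p₁,p₂) with the one-type frog model started from A∪B with jump probability p₁, so that both processes use the same initial particle configuration, the same family of random walks S, and the same family of delay variables L. Then deterministically, for every n ≥ 0, ξ^{A∪B}_n(p₁) ⊆ ξ^{A,B}_n(p₁,p₂): every site discovered by time n in the one-type process with the slower jump probability is discovered by time n in the two-type process. -/

import Mathlib

open MeasureTheory ProbabilityTheory Filter Set
open scoped Pointwise ENNReal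

namespace Frog

variable (d : ℕ)

/-- Sites of the lattice `ℤ^d`. -/
abbrev Site := Fin d → ℤ

/-- Sample space: an initial configuration (number of sleeping particles at each site),
a family of random-walk increments indexed by particles `(x,j)`, and a family of delay
variables `L^{x,j}_{n,k}` indexed by particles. -/
abbrev Omega := (Site d → ℕ) × ((Site d × ℕ) → ℕ → Site d) × ((Site d × ℕ) → ℕ → ℕ → ℝ)

/-- The `2d` unit vectors `±e_i` of `ℤ^d`. -/
def unitVecs : Finset (Site d) :=
  (Finset.univ : Finset (Fin d × Bool)).image
    (fun q => fun i => if i = q.1 then (if q.2 then 1 else -1) else 0)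

/-- The uniform distribution on the `2d` unit vectors, i.e. the law of one increment of a
simple symmetric random walk on `ℤ^d`. -/
noncomputable def stepLaw : Measure (Site d) :=
  ((unitVecs d).card : ℝ≥0∞)⁻¹ • ∑ e ∈ unitVecs d, Measure.dirac e

/-- The uniform distribution on `[0,1]`. -/
noncomputable def unif01 : Measure ℝ := volume.restrict (Set.Icc (0:ℝ) 1)

/-- Waiting time for the next jump of a lazy particle with jump probability `p`, given the
row `Ln = L^{x,j}_{n,·}` of its delay variables: the least `k ≥ 1` with `Ln k ≤ p`
(`⊤` if there is no such `k`). -/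
noncomputable def wait (p : ℝ) (Ln : ℕ → ℝ) : ℕ∞ :=
  sInf ((↑) '' {k : ℕ | 1 ≤ k ∧ Ln k ≤ p})

/-- Time of the `n`-th jump of a particle with jump probability `p`, delay variables `L`,
activated at time `a`. -/
noncomputable def jumpTime (p : ℝ) (L : ℕ → ℕ → ℝ) (a : ℕ) : ℕ → ℕ∞
  | 0 => (a : ℕ∞)
  | n + 1 => jumpTime p L a n + wait p (L n)

open Classical in
/-- Number of jumps performed by time `t` by a particle with jump probability `p`,
delay variables `L`, activated at time `a`. -/
noncomputable def numJumps (p : ℝ) (L : ℕ → ℕ → ℝ) (a t : ℕ) : ℕ :=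
  ((Finset.range (t + 1)).filter (fun n => jumpTime p L a (n + 1) ≤ (t : ℕ∞))).card

/-- Position at time `t` of a particle started at `x`, with random-walk increments `s`,
jump probability `p`, delay variables `L`, activated at time `a`. -/
noncomputable def posAt (x : Site d) (s : ℕ → Site d) (p : ℝ) (L : ℕ → ℕ → ℝ)
    (a t : ℕ) : Site d :=
  x + ∑ k ∈ Finset.range (numJumps p L a t), s k

open Classical in
/-- The full state of the two-type frog model: `status₂ … t y = some (i, a)` means that site
`y` has been discovered by time `t`, that it was discovered at time `a`, and that its
particles carry type `i` (`false` = type 1, `true` = type 2); `none` means `y` is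
undiscovered at time `t`.  Type-`i` particles jump with probability `p i`; particles in `A`
(resp. `B`) are active with type 1 (resp. 2) from time `0`; `tie` is the tie-breaker rule
used when both types simultaneously reach an undiscovered site. -/
noncomputable def status₂ (config : Site d → ℕ) (S : (Site d × ℕ) → ℕ → Site d)
    (L : (Site d × ℕ) → ℕ → ℕ → ℝ) (p : Bool → ℝ) (A B : Set (Site d))
    (tie : Site d → ℕ → Bool) : ℕ → Site d → Option (Bool × ℕ)
  | 0, y => if y ∈ A then some (false, 0) else if y ∈ B then some (true, 0) else none
  | t + 1, y =>
    match status₂ config S L p A B tie t y with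
    | some s => some s
    | none =>
      have hit : Bool → Prop := fun i => ∃ x j a, j < config x ∧
        status₂ config S L p A B tie t x = some (i, a) ∧
        posAt d x (S (x, j)) (p i) (L (x, j)) a (t + 1) = y
      if hit false then
        (if hit true then some (tie y (t + 1), t + 1) else some (false, t + 1))
      else if hit true then some (true, t + 1) else none

/-- Set of sites discovered by time `t` in the two-type model. -/
noncomputable def xi₂ (config : Site d → ℕ) (S : (Site d × ℕ) → ℕ → Site d)
    (L : (Site d × ℕ) → ℕ → ℕ → ℝ) (p₁ p₂ : ℝ) (A B : Set (Site d))
    (tie : Site d → ℕ → Bool) (t : ℕ) : Set (Site d) :=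
  {y | status₂ d config S L (fun i => if i then p₂ else p₁) A B tie t y ≠ none}

/-- State of the one-type frog model with jump probability `p` and initially active set `A₀`:
`status₁ … t y = some a` iff site `y` has been discovered at time `a ≤ t`.  It is the
two-type model with an empty second initial set. -/
noncomputable def status₁ (config : Site d → ℕ) (S : (Site d × ℕ) → ℕ → Site d)
    (L : (Site d × ℕ) → ℕ → ℕ → ℝ) (p : ℝ) (A₀ : Set (Site d)) (t : ℕ) (y : Site d) :
    Option ℕ :=
  (status₂ d config S L (fun _ => p) A₀ ∅ (fun _ _ => false) t y).map Prod.snd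

/-- Set of sites discovered by time `t` in the one-type model. -/
noncomputable def xi₁ (config : Site d → ℕ) (S : (Site d × ℕ) → ℕ → Site d)
    (L : (Site d × ℕ) → ℕ → ℕ → ℝ) (p : ℝ) (A₀ : Set (Site d)) (t : ℕ) : Set (Site d) :=
  {y | status₁ d config S L p A₀ t y ≠ none}

/-- Continuum version of a set of sites: each site is replaced by the half-open unit cube
centered at it. -/
def cont (ξ : Set (Site d)) : Set (Fin d → ℝ) :=
  {z | ∃ x ∈ ξ, ∀ i, -(1/2 : ℝ) < z i - x i ∧ z i - x i ≤ 1/2}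

/-- Continuum set of discovered sites for the one-type model driven by the randomness `ω`. -/
noncomputable def Xi₁ (p : ℝ) (A₀ : Set (Site d)) (t : ℕ) (ω : Omega d) :
    Set (Fin d → ℝ) :=
  cont d (xi₁ d ω.1 ω.2.1 ω.2.2 p A₀ t)

/-- Continuum set of discovered sites for the two-type model driven by the randomness `ω`. -/
noncomputable def Xi₂ (p₁ p₂ : ℝ) (A B : Set (Site d)) (tie : Site d → ℕ → Bool) (t : ℕ)
    (ω : Omega d) : Set (Fin d → ℝ) :=
  cont d (xi₂ d ω.1 ω.2.1 ω.2.2 p₁ p₂ A B tie t)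

section Independence

variable (Arb : Set (Site d))

/-- Index type for the family of all independent random coordinates: the configuration on
the arbitrarily populated region `Arb` (as one block), the configuration at each site
outside `Arb`, each random-walk increment, and each delay variable. -/
abbrev Idx := (Unit ⊕ {x : Site d // x ∉ Arb}) ⊕ ((Site d × ℕ) × ℕ ⊕ (Site d × ℕ) × ℕ × ℕ)

/-- Value type of each coordinate. -/
def fam : Idx d Arb → Type :=
  fun i => match i with
  | .inl (.inl _) => {x : Site d // x ∈ Arb} → ℕ
  | .inl (.inr _) => ℕ
  | .inr (.inl _) => Site d
  | .inr (.inr _) => ℝ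

/-- Measurable structure on the coordinates. -/
def famMS : ∀ i, MeasurableSpace (fam d Arb i) :=
  fun i => match i with
  | .inl (.inl _) => inferInstanceAs (MeasurableSpace ({x : Site d // x ∈ Arb} → ℕ))
  | .inl (.inr _) => inferInstanceAs (MeasurableSpace ℕ)
  | .inr (.inl _) => inferInstanceAs (MeasurableSpace (Site d))
  | .inr (.inr _) => inferInstanceAs (MeasurableSpace ℝ)

/-- The family of coordinate random variables on the sample space. -/
def coords : ∀ i, Omega d → fam d Arb i :=
  fun i => match i with
  | .inl (.inl _) => fun ω x => ω.1 x.1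
  | .inl (.inr x) => fun ω => ω.1 x.1
  | .inr (.inl q) => fun ω => ω.2.1 q.1 q.2
  | .inr (.inr q) => fun ω => ω.2.2 q.1 q.2.1 q.2.2

/-- `P` is a law of the frog model randomness with i.i.d. configuration `ν` outside the
region `Arb` (on which the configuration is arbitrary): all coordinates -- the configuration
block on `Arb`, the configuration variables off `Arb`, the random-walk increments and the
delay variables -- are jointly independent, the increments are uniform on the `2d` unit
vectors, the delays are uniform on `[0,1]`, and each configuration variable off `Arb` has
law `ν`. -/
def IsFrogMeasure (ν : Measure ℕ) (P : Measure (Omega d)) : Prop :=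
  IsProbabilityMeasure P ∧
  iIndepFun (m := famMS d Arb) (coords d Arb) P ∧
  (∀ x ∉ Arb, P.map (fun ω : Omega d => ω.1 x) = ν) ∧
  (∀ q n, P.map (fun ω : Omega d => ω.2.1 q n) = stepLaw d) ∧
  (∀ q n k, P.map (fun ω : Omega d => ω.2.2 q n k) = unif01)

end Independence

/-- The one-type shape property: the continuum discovered set of the process with jump
probability `p` started from the initially active set `A₀`, scaled by time, approximates
`𝒜` to within `ε`, eventually, almost surely. -/
def HasShape (P : Measure (Omega d)) (p : ℝ) (A₀ : Set (Site d))
    (𝒜 : Set (Fin d → ℝ)) : Prop :=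
  ∀ ε : ℝ, 0 < ε → ε < 1 → ∀ᵐ ω ∂P, ∀ᶠ n : ℕ in atTop,
    ((1 - ε) * n) • 𝒜 ⊆ Xi₁ d p A₀ n ω ∧ Xi₁ d p A₀ n ω ⊆ ((1 + ε) * n) • 𝒜

/-- The event that the origin carries at least one particle. -/
def occupied : Set (Omega d) := {ω | 1 ≤ ω.1 0}

/-- `discoversAt₂ … x j t y` : in the two-type model, particle `j` at site `x` exists, is
active, sits on `y` at time `t`, and `y` is discovered exactly at time `t` (so `(x,j)` is
one of the particles discovering `y`). -/
noncomputable def discoversAt₂ (config : Site d → ℕ) (S : (Site d × ℕ) → ℕ → Site d)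
    (L : (Site d × ℕ) → ℕ → ℕ → ℝ) (p₁ p₂ : ℝ) (A B : Set (Site d))
    (tie : Site d → ℕ → Bool) (x : Site d) (j : ℕ) (t : ℕ) (y : Site d) : Prop :=
  j < config x ∧
  status₂ d config S L (fun i => if i then p₂ else p₁) A B tie t y ≠ none ∧
  (∀ t' < t, status₂ d config S L (fun i => if i then p₂ else p₁) A B tie t' y = none) ∧
  ∃ i a, status₂ d config S L (fun i => if i then p₂ else p₁) A B tie t x = some (i, a) ∧
    posAt d x (S (x, j)) (if i then p₂ else p₁) (L (x, j)) a t = y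

/-- Same notion for the one-type model. -/
noncomputable def discoversAt₁ (config : Site d → ℕ) (S : (Site d × ℕ) → ℕ → Site d)
    (L : (Site d × ℕ) → ℕ → ℕ → ℝ) (p : ℝ) (A₀ : Set (Site d))
    (x : Site d) (j : ℕ) (t : ℕ) (y : Site d) : Prop :=
  discoversAt₂ d config S L p p A₀ ∅ (fun _ _ => false) x j t y

/-- The set of sites ever discovered by particle `(x,j)` in the one-type model. -/
noncomputable def discoveredBy₁ (config : Site d → ℕ) (S : (Site d × ℕ) → ℕ → Site d)
    (L : (Site d × ℕ) → ℕ → ℕ → ℝ) (p : ℝ) (A₀ : Set (Site d)) (x : Site d) (j : ℕ) :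
    Set (Site d) :=
  {y | ∃ t, discoversAt₁ d config S L p A₀ x j t y}

/-- The set of sites ever discovered by particle `(x,j)` in the two-type model. -/
noncomputable def discoveredBy₂ (config : Site d → ℕ) (S : (Site d × ℕ) → ℕ → Site d)
    (L : (Site d × ℕ) → ℕ → ℕ → ℝ) (p₁ p₂ : ℝ) (A B : Set (Site d))
    (tie : Site d → ℕ → Bool) (x : Site d) (j : ℕ) : Set (Site d) :=
  {y | ∃ t, discoversAt₂ d config S L p₁ p₂ A B tie x j t y}

/-- The set of particles ever activated with type `i` in the two-type model. -/
noncomputable def typedParticles (config : Site d → ℕ) (S : (Site d × ℕ) → ℕ → Site d)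
    (L : (Site d × ℕ) → ℕ → ℕ → ℝ) (p₁ p₂ : ℝ) (A B : Set (Site d))
    (tie : Site d → ℕ → Bool) (i : Bool) : Set (Site d × ℕ) :=
  {q | q.2 < config q.1 ∧ ∃ t a,
    status₂ d config S L (fun i => if i then p₂ else p₁) A B tie t q.1 = some (i, a)}

/-- The coexistence event: both types activate infinitely many particles. -/
noncomputable def coex (p₁ p₂ : ℝ) (A B : Set (Site d)) (tie : Site d → ℕ → Bool) :
    Set (Omega d) :=
  {ω | (typedParticles d ω.1 ω.2.1 ω.2.2 p₁ p₂ A B tie false).Infinite ∧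
       (typedParticles d ω.1 ω.2.1 ω.2.2 p₁ p₂ A B tie true).Infinite}

end Frog


namespace Frog

section Coupling

variable {d : ℕ}

lemma one_le_wait (p : ℝ) (Ln : ℕ → ℝ) : 1 ≤ wait p Ln := by
  refine le_sInf ?_
  rintro _ ⟨k, ⟨hk, _⟩, rfl⟩
  exact_mod_cast hk

lemma wait_anti {p q : ℝ} (h : p ≤ q) (Ln : ℕ → ℝ) : wait q Ln ≤ wait p Ln := by
  apply sInf_le_sInf
  rintro _ ⟨k, ⟨hk, hkp⟩, rfl⟩
  exact ⟨k, ⟨hk, hkp.trans h⟩, rfl⟩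

lemma jumpTime_le {p q : ℝ} (h : p ≤ q) (L : ℕ → ℕ → ℝ) {a' a : ℕ} (ha : a' ≤ a) :
    ∀ n, jumpTime q L a' n ≤ jumpTime p L a n := by
  intro n
  induction n with
  | zero => simpa [jumpTime] using (Nat.cast_le (α := ℕ∞)).2 ha
  | succ n ih =>
    simp only [jumpTime]
    exact add_le_add ih (wait_anti h _)

lemma jumpTime_succ_ge (p : ℝ) (L : ℕ → ℕ → ℝ) (a n : ℕ) :
    jumpTime p L a n + 1 ≤ jumpTime p L a (n + 1) := by
  simp only [jumpTime]
  exact add_le_add_right (one_le_wait _ _) _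

lemma le_jumpTime (p : ℝ) (L : ℕ → ℕ → ℝ) (a : ℕ) : ∀ n : ℕ, (n : ℕ∞) ≤ jumpTime p L a n := by
  intro n
  induction n with
  | zero => simp [jumpTime]
  | succ n ih =>
    calc ((n + 1 : ℕ) : ℕ∞) = (n : ℕ∞) + 1 := by push_cast; ring
    _ ≤ jumpTime p L a n + 1 := add_le_add_left ih 1
    _ ≤ _ := jumpTime_succ_ge p L a n

lemma jumpTime_mono_n (p : ℝ) (L : ℕ → ℕ → ℝ) (a : ℕ) {m n : ℕ} (h : m ≤ n) :
    jumpTime p L a m ≤ jumpTime p L a n := by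
  induction n with
  | zero => simp [Nat.le_zero.mp h]
  | succ n ih =>
    rcases Nat.lt_or_ge m (n + 1) with hlt | hge
    · exact (ih (Nat.lt_succ_iff.mp hlt)).trans
        ((le_self_add).trans (jumpTime_succ_ge p L a n))
    · have : m = n + 1 := le_antisymm h hge
      subst this; exact le_refl _

lemma lt_numJumps_iff (p : ℝ) (L : ℕ → ℕ → ℝ) (a t n : ℕ) :
    n < numJumps p L a t ↔ jumpTime p L a (n + 1) ≤ (t : ℕ∞) := by
  classical
  unfold numJumps
  constructor
  · intro h
    by_contra hc
    push_neg at hc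
    have hsub : ((Finset.range (t + 1)).filter
        (fun m => jumpTime p L a (m + 1) ≤ (t : ℕ∞))) ⊆ Finset.range n := by
      intro k hk
      simp only [Finset.mem_filter, Finset.mem_range] at hk ⊢
      by_contra hkn
      push_neg at hkn
      exact absurd (lt_of_lt_of_le hc
        (jumpTime_mono_n p L a (by omega : n + 1 ≤ k + 1))) (not_lt.2 hk.2)
    have hcard := Finset.card_le_card hsub
    simp only [Finset.card_range] at hcard
    omega
  · intro h
    have hsub : Finset.range (n + 1) ⊆ ((Finset.range (t + 1)).filter
        (fun m => jumpTime p L a (m + 1) ≤ (t : ℕ∞))) := by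
      intro k hk
      simp only [Finset.mem_range] at hk
      have hjk : jumpTime p L a (k + 1) ≤ (t : ℕ∞) :=
        (jumpTime_mono_n p L a (by omega)).trans h
      have hk1 : ((k + 1 : ℕ) : ℕ∞) ≤ (t : ℕ∞) := (le_jumpTime p L a (k + 1)).trans hjk
      have hkt : k + 1 ≤ t := by exact_mod_cast hk1
      simp only [Finset.mem_filter, Finset.mem_range]
      exact ⟨by omega, hjk⟩
    have hcard := Finset.card_le_card hsub
    simp only [Finset.card_range] at hcard
    omega

lemma numJumps_zero (p : ℝ) (L : ℕ → ℕ → ℝ) (a : ℕ) : numJumps p L a 0 = 0 := by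
  by_contra h
  have h0 : 0 < numJumps p L a 0 := Nat.pos_of_ne_zero h
  have h1 := (lt_numJumps_iff p L a 0 0).1 h0
  have h2 := le_jumpTime p L a 1
  have : ((1 : ℕ) : ℕ∞) ≤ ((0 : ℕ) : ℕ∞) := h2.trans h1
  exact absurd (by exact_mod_cast this) (by omega)

lemma numJumps_mono {p q : ℝ} (h : p ≤ q) (L : ℕ → ℕ → ℝ) {a' a : ℕ} (ha : a' ≤ a)
    (t : ℕ) : numJumps p L a t ≤ numJumps q L a' t := by
  refine le_of_forall_lt fun n hn => ?_
  rw [lt_numJumps_iff] at hn ⊢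
  exact (jumpTime_le h L ha (n + 1)).trans hn

lemma numJumps_mono_t (p : ℝ) (L : ℕ → ℕ → ℝ) (a : ℕ) {t t' : ℕ} (h : t ≤ t') :
    numJumps p L a t ≤ numJumps p L a t' := by
  refine le_of_forall_lt fun n hn => ?_
  rw [lt_numJumps_iff] at hn ⊢
  exact hn.trans (by exact_mod_cast h)

lemma numJumps_step (p : ℝ) (L : ℕ → ℕ → ℝ) (a t : ℕ) :
    numJumps p L a (t + 1) ≤ numJumps p L a t + 1 := by
  by_contra h
  push_neg at h
  have h1 : numJumps p L a t + 1 < numJumps p L a (t + 1) := h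
  have h2 := (lt_numJumps_iff p L a (t + 1) (numJumps p L a t + 1)).1 h1
  have h3 : jumpTime p L a (numJumps p L a t + 1) + 1 ≤ ((t + 1 : ℕ) : ℕ∞) :=
    (jumpTime_succ_ge p L a _).trans h2
  have h4 : jumpTime p L a (numJumps p L a t + 1) ≤ (t : ℕ∞) := by
    have hxt : jumpTime p L a (numJumps p L a t + 1) ≠ ⊤ := by
      intro h'
      rw [h'] at h3
      simp only [top_add, top_le_iff] at h3
      exact (by exact_mod_cast ENat.coe_ne_top (t + 1) : ((t + 1 : ℕ) : ℕ∞) ≠ ⊤) h3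
    have hlt : jumpTime p L a (numJumps p L a t + 1) < ((t : ℕ∞) + 1) := by
      rw [← ENat.add_one_le_iff hxt]
      exact h3.trans_eq (by push_cast; ring)
    exact (ENat.lt_add_one_iff (ENat.coe_ne_top t)).mp hlt
  have h5 : numJumps p L a t < numJumps p L a t := by
    rw [lt_numJumps_iff]
    exact (jumpTime_mono_n p L a (by omega)).trans h4
  omega

lemma exists_numJumps_eq {f : ℕ → ℕ} (h0 : f 0 = 0) (hstep : ∀ s, f (s + 1) ≤ f s + 1)
    {m N : ℕ} (hm : m ≤ f N) : ∃ t' ≤ N, f t' = m := by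
  induction N with
  | zero => exact ⟨0, le_refl 0, by omega⟩
  | succ N ih =>
    rcases le_or_gt m (f N) with h | h
    · obtain ⟨t', ht', hft⟩ := ih h
      exact ⟨t', by omega, hft⟩
    · exact ⟨N + 1, le_refl _, by have := hstep N; omega⟩

variable {config : Site d → ℕ} {S : (Site d × ℕ) → ℕ → Site d}
  {L : (Site d × ℕ) → ℕ → ℕ → ℝ} {p : Bool → ℝ} {A B : Set (Site d)}
  {tie : Site d → ℕ → Bool}

lemma status₂_succ_of_some {t : ℕ} {y : Site d} {s : Bool × ℕ}
    (h : status₂ d config S L p A B tie t y = some s) :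
    status₂ d config S L p A B tie (t + 1) y = some s := by
  rw [status₂, h]

lemma status₂_mono {t t' : ℕ} (htt : t ≤ t') {y : Site d} {s : Bool × ℕ}
    (h : status₂ d config S L p A B tie t y = some s) :
    status₂ d config S L p A B tie t' y = some s := by
  induction t' with
  | zero => rwa [Nat.le_zero.mp htt] at h
  | succ t' ih =>
    rcases Nat.lt_or_ge t (t' + 1) with hlt | hge
    · exact status₂_succ_of_some (ih (Nat.lt_succ_iff.mp hlt))
    · rwa [le_antisymm htt hge] at h

lemma status₂_snd_le : ∀ t : ℕ, ∀ y : Site d, ∀ i : Bool, ∀ a : ℕ,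
    status₂ d config S L p A B tie t y = some (i, a) →
    a ≤ t ∧ status₂ d config S L p A B tie a y = some (i, a) := by
  intro t
  induction t with
  | zero =>
    intro y i a h
    have horig := h
    rw [status₂] at h
    split_ifs at h <;>
      first
        | (simp only [Option.some.injEq, Prod.mk.injEq] at h
           obtain ⟨h1, h2⟩ := h
           subst h2
           exact ⟨le_refl _, horig⟩)
        | cases h
  | succ t ih =>
    intro y i a h
    rcases hprev : status₂ d config S L p A B tie t y with _ | s
    · have horig := h
      rw [status₂, hprev] at h
      dsimp only at h
      split_ifs at h <;>
        first
          | (simp only [Option.some.injEq, Prod.mk.injEq] at h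
             obtain ⟨h1, h2⟩ := h
             subst h2
             exact ⟨le_refl _, horig⟩)
          | cases h
    · have h' := status₂_succ_of_some hprev
      rw [h'] at h
      obtain rfl : s = (i, a) := by injection h
      obtain ⟨ha, hs⟩ := ih y i a hprev
      exact ⟨by omega, hs⟩

lemma status₂_ne_none_mono {t t' : ℕ} (htt : t ≤ t') {y : Site d}
    (h : status₂ d config S L p A B tie t y ≠ none) :
    status₂ d config S L p A B tie t' y ≠ none := by
  rcases hs : status₂ d config S L p A B tie t y with _ | s
  · exact absurd hs h
  · rw [status₂_mono htt hs]; simp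

/-- If an active particle sits on `y` at time `t+1`, then `y` is discovered by time `t+1`. -/
lemma status₂_succ_ne_none_of_hit {t : ℕ} {y : Site d} (i₀ : Bool) (x : Site d)
    (j a₀ : ℕ) (hj : j < config x)
    (hx : status₂ d config S L p A B tie t x = some (i₀, a₀))
    (hpos : posAt d x (S (x, j)) (p i₀) (L (x, j)) a₀ (t + 1) = y) :
    status₂ d config S L p A B tie (t + 1) y ≠ none := by
  rcases hyprev : status₂ d config S L p A B tie t y with _ | s2
  · intro hcon
    rw [status₂, hyprev] at hcon
    dsimp only at hcon
    split_ifs at hcon with h1 h2 h3 <;> try exact Option.noConfusion hcon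
    cases i₀
    · exact h1 ⟨x, j, a₀, hj, hx, hpos⟩
    · exact h3 ⟨x, j, a₀, hj, hx, hpos⟩
  · rw [status₂_succ_of_some hyprev]
    simp

/-- Case analysis for a site discovered by time `t+1`: either it was already discovered by
time `t`, or some active particle sits on it at time `t+1`. -/
lemma status₂_succ_cases {t : ℕ} {y : Site d} {s : Bool × ℕ}
    (h : status₂ d config S L p A B tie (t + 1) y = some s) :
    status₂ d config S L p A B tie t y = some s ∨
      (s.2 = t + 1 ∧ ∃ i₀ : Bool, ∃ x : Site d, ∃ j a₀ : ℕ, j < config x ∧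
        status₂ d config S L p A B tie t x = some (i₀, a₀) ∧
        posAt d x (S (x, j)) (p i₀) (L (x, j)) a₀ (t + 1) = y) := by
  rcases hyprev : status₂ d config S L p A B tie t y with _ | s2
  · right
    rw [status₂, hyprev] at h
    dsimp only at h
    split_ifs at h with hf ht ht <;>
      first
      | exact Option.noConfusion h
      | (injection h with h'
         subst h'
         first
         | exact ⟨rfl, false, hf⟩
         | exact ⟨rfl, true, ht⟩)
  · left
    rw [status₂_succ_of_some hyprev] at h
    exact h

end Coupling

section Key

variable {d : ℕ}

lemma key {p₁ p₂ : ℝ} (hp : p₁ ≤ p₂) {A B : Set (Site d)} (hAB : Disjoint A B)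
    (config : Site d → ℕ) (S : (Site d × ℕ) → ℕ → Site d)
    (L : (Site d × ℕ) → ℕ → ℕ → ℝ) (tie : Site d → ℕ → Bool) :
    ∀ t : ℕ, ∀ y : Site d, ∀ i : Bool, ∀ a : ℕ,
      status₂ d config S L (fun _ => p₁) (A ∪ B) ∅ (fun _ _ => false) t y = some (i, a) →
      ∃ i' a', a' ≤ a ∧
        status₂ d config S L (fun i => if i then p₂ else p₁) A B tie t y = some (i', a') := by
  intro t
  induction t with
  | zero =>
    intro y i a h
    rw [status₂] at h
    by_cases hy : y ∈ A ∪ B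
    · rw [if_pos hy] at h
      rcases hy with hA | hB
      · exact ⟨false, 0, Nat.zero_le _, by rw [status₂]; simp [hA]⟩
      · refine ⟨true, 0, Nat.zero_le _, ?_⟩
        rw [status₂]
        simp [hB, Set.disjoint_right.mp hAB hB]
    · rw [if_neg hy, if_neg (Set.notMem_empty y)] at h
      cases h
  | succ t ih =>
    intro y i a h
    rcases status₂_succ_cases h with hprev | ⟨ha, i₀, x, j, a₀, hj, hx, hpos⟩
    · obtain ⟨i', a', ha', h2⟩ := ih y i a hprev
      exact ⟨i', a', ha', status₂_succ_of_some h2⟩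
    · -- newly discovered at time t+1, by particle (x, j) activated at a₀
      simp only at ha
      obtain ⟨i', a', ha', hx2⟩ := ih x i₀ a₀ hx
      have hq : p₁ ≤ (fun i : Bool => if i then p₂ else p₁) i' := by
        cases i' <;> simp [hp]
      have hmle : numJumps ((fun _ : Bool => p₁) i₀) (L (x, j)) a₀ (t + 1)
          ≤ numJumps ((fun i : Bool => if i then p₂ else p₁) i') (L (x, j)) a' (t + 1) :=
        numJumps_mono hq _ ha' _
      obtain ⟨t', ht'le, ht'⟩ := exists_numJumps_eq (numJumps_zero _ _ _)
        (fun s => numJumps_step _ _ _ s) hmle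
      have hpos2 : posAt d x (S (x, j)) ((fun i : Bool => if i then p₂ else p₁) i')
          (L (x, j)) a' t' = y := by
        rw [← hpos]
        unfold posAt
        rw [ht']
      have hne : status₂ d config S L (fun i => if i then p₂ else p₁) A B tie (t + 1) y
          ≠ none := by
        rcases Nat.eq_zero_or_pos (numJumps ((fun _ : Bool => p₁) i₀) (L (x, j)) a₀ (t + 1))
          with hm0 | hmpos
        · -- the particle has not jumped yet: y = x
          have hyx : y = x := by
            rw [← hpos]
            unfold posAt
            rw [hm0]
            simp
          rw [hyx, status₂_mono (Nat.le_succ t) hx2]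
          simp
        · -- the two-type particle has jumped at least once, so t' ≥ a' + 1
          have h1m : 0 < numJumps ((fun i : Bool => if i then p₂ else p₁) i')
              (L (x, j)) a' t' := ht' ▸ hmpos
          have hjt := (lt_numJumps_iff _ _ _ _ 0).1 h1m
          have ha1t : ((a' + 1 : ℕ) : ℕ∞) ≤ (t' : ℕ∞) := by
            refine le_trans ?_ hjt
            calc ((a' + 1 : ℕ) : ℕ∞)
                = jumpTime ((fun i : Bool => if i then p₂ else p₁) i') (L (x, j)) a' 0 + 1 := by
                  simp [jumpTime]
            _ ≤ _ := jumpTime_succ_ge _ _ _ 0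
          have ha1t' : a' + 1 ≤ t' := by exact_mod_cast ha1t
          obtain ⟨t'', rfl⟩ : ∃ t'', t' = t'' + 1 := ⟨t' - 1, by omega⟩
          have hxstat : status₂ d config S L (fun i => if i then p₂ else p₁) A B tie t'' x
              = some (i', a') :=
            status₂_mono (by omega) (status₂_snd_le _ x i' a' hx2).2
          exact status₂_ne_none_mono (by omega)
            (status₂_succ_ne_none_of_hit i' x j a' hj hxstat hpos2)
      rcases hres : status₂ d config S L (fun i => if i then p₂ else p₁) A B tie (t + 1) y
        with _ | s2
      · exact absurd hres hne
      · obtain ⟨i'', a''⟩ := s2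
        have ha'' := (status₂_snd_le _ y i'' a'' hres).1
        exact ⟨i'', a'', by omega, rfl⟩

end Key

end Frog


/-- **Coupling monotonicity (claim in the proof of Lemma 3.1).**  Fix `d ≥ 1` and
`p₁ ≤ p₂` in `(0,1]`.  Couple the two-type frog model started from disjoint bounded sets
`(A,B)` with jump probabilities `(p₁,p₂)` with the one-type frog model started from `A ∪ B`
with jump probability `p₁`, using the same initial configuration `config`, the same family
of random walks `S` and the same family of delay variables `L`.  Then, deterministically,
for every `n`, every site discovered by time `n` in the one-type process is discovered by
time `n` in the two-type process: `ξ^{A∪B}_n(p₁) ⊆ ξ^{A,B}_n(p₁,p₂)`. -/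

theorem one_type_discovered_subset_two_type_discovered (d : ℕ) (hd : 1 ≤ d)
    (p₁ p₂ : ℝ) (hp₁0 : 0 < p₁) (hp₁₂ : p₁ ≤ p₂) (hp₂1 : p₂ ≤ 1)
    (A B : Set (Frog.Site d)) (hAB : Disjoint A B) (hAbdd : A.Finite) (hBbdd : B.Finite)
    (config : Frog.Site d → ℕ) (S : (Frog.Site d × ℕ) → ℕ → Frog.Site d)
    (L : (Frog.Site d × ℕ) → ℕ → ℕ → ℝ) (tie : Frog.Site d → ℕ → Bool) (n : ℕ) :
    Frog.xi₁ d config S L p₁ (A ∪ B) n ⊆ Frog.xi₂ d config S L p₁ p₂ A B tie n := by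
  intro y hy
  simp only [Frog.xi₁, Frog.status₁, Set.mem_setOf_eq] at hy
  have hst : Frog.status₂ d config S L (fun _ => p₁) (A ∪ B) ∅ (fun _ _ => false) n y
      ≠ none := by
    intro h
    exact hy (by rw [h]; rfl)
  rcases hres : Frog.status₂ d config S L (fun _ => p₁) (A ∪ B) ∅ (fun _ _ => false) n y
    with _ | s
  · exact absurd hres hst
  · obtain ⟨i, a⟩ := s
    obtain ⟨i', a', _, h2⟩ := Frog.key hp₁₂ hAB config S L tie n y i a hres
    simp only [Frog.xi₂, Set.mem_setOf_eq, h2]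
    simp
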